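/- For any p ∈ [0,1], the binary entropy in bits satisfies H₂(p) ≤ (4p(1−p))^(1/ln 4). -/

import Mathlib

open Real Set Filter Topology

namespace BEaux

noncomputable def c : ℝ := 1 / (2 * Real.log 2)
noncomputable def b : ℝ := 2 * c - 1

lemma log2_pos : 0 < Real.log 2 := Real.log_pos (by norm_num)

lemma c_gt : 0.7213 < c := by
  have h := Real.log_two_lt_d9
  rw [c, lt_div_iff₀ (by positivity)]
  nlinarith

lemma c_lt : c < 0.7214 := by
  have h := Real.log_two_gt_d9
  rw [c, div_lt_iff₀ (by positivity)]
  nlinarith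

lemma b_gt : 0.4426 < b := by have := c_gt; rw [b]; linarith
lemma b_lt : b < 0.4428 := by have := c_lt; rw [b]; linarith

lemma log2c : Real.log 2 * c = 1/2 := by
  rw [c]; field_simp

noncomputable def L (p : ℝ) : ℝ := Real.log (1 - p) - Real.log p
noncomputable def X (p : ℝ) : ℝ := 1 - 2 * p
noncomputable def Q (p : ℝ) : ℝ := 4 * p * (1 - p)
noncomputable def A4 (p : ℝ) : ℝ := X p * L p
noncomputable def U (p : ℝ) : ℝ := (1 - b) * X p - b * (1 - X p ^ 2) * L p
noncomputable def V (p : ℝ) : ℝ := X p - (1 - b * X p ^ 2) * L p / 2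
noncomputable def Psi (p : ℝ) : ℝ :=
  Real.log (2 * X p) - Real.log (L p) - (1 - c) * Real.log (Q p)
noncomputable def F (p : ℝ) : ℝ := Real.log 2 * Q p ^ c - Real.binEntropy p

section basic
variable {p : ℝ} (h0 : 0 < p) (h2 : p < 1/2)
include h0 h2

lemma Xpos : 0 < X p := by rw [X]; linarith
lemma Lpos : 0 < L p := by rw [L]; have := Real.log_lt_log h0 (by linarith : p < 1 - p); linarith
lemma pqpos : 0 < p * (1 - p) := by nlinarith
lemma Qpos : 0 < Q p := by rw [Q]; nlinarith

lemma hasDerivAt_L : HasDerivAt L (-(1/(p*(1-p)))) p := by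
  have h1 : HasDerivAt (fun x : ℝ => 1 - x) (-1) p := (hasDerivAt_id p).const_sub 1
  have h2' : HasDerivAt (fun x : ℝ => Real.log (1 - x)) ((-1)/(1-p)) p :=
    h1.log (by linarith)
  have h3 : HasDerivAt (fun x : ℝ => Real.log x) (1/p) p := by
    simpa using (hasDerivAt_id p).log h0.ne'
  have hq : (1:ℝ) - p ≠ 0 := by linarith
  have heq : (-(1/(p*(1-p)))) = (-1)/(1-p) - 1/p := by
    field_simp
    ring
  exact heq ▸ h2'.sub h3

lemma hasDerivAt_X : HasDerivAt X (-2) p := by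
  have : HasDerivAt (fun x : ℝ => 1 - 2 * x) (-2) p := by
    simpa using ((hasDerivAt_id p).const_mul (2:ℝ)).const_sub 1
  exact this

lemma hasDerivAt_Q : HasDerivAt Q (4 - 8 * p) p := by
  have : HasDerivAt (fun x : ℝ => 4 * x * (1 - x)) (4 * (1-p) + (4*p) * (-1)) p := by
    have hm : HasDerivAt (fun x : ℝ => 4 * x) 4 p := by
      simpa using (hasDerivAt_id p).const_mul (4:ℝ)
    exact hm.mul ((hasDerivAt_id p).const_sub 1)
  exact this.congr_deriv (by ring)

end basic

section deriv
variable {p : ℝ} (h0 : 0 < p) (h2 : p < 1/2)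
include h0 h2

lemma hasDerivAt_A4 : HasDerivAt A4 (-2 * L p + X p * (-(1/(p*(1-p))))) p := by
  have := (hasDerivAt_X h0 h2).mul (hasDerivAt_L h0 h2)
  exact this

lemma A4_deriv_neg : -2 * L p + X p * (-(1/(p*(1-p)))) < 0 := by
  have hL := Lpos h0 h2
  have hX := Xpos h0 h2
  have hpq := pqpos h0 h2
  have : 0 < X p * (1/(p*(1-p))) := by positivity
  nlinarith

lemma hasDerivAt_U : HasDerivAt U ((6 * b - 2) - 4 * b * A4 p) p := by
  have hX := hasDerivAt_X h0 h2
  have hL := hasDerivAt_L h0 h2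
  have hX2 : HasDerivAt (fun x => 1 - X x ^ 2) (4 * X p) p := by
    refine ((hX.pow 2).const_sub 1).congr_deriv ?_
    simp
    ring
  have h1 : HasDerivAt (fun x => (1 - b) * X x) ((1 - b) * (-2)) p := hX.const_mul _
  have h2' : HasDerivAt (fun x => b * (1 - X x ^ 2) * L x)
      ((b * (4 * X p)) * L p + (b * (1 - X p ^ 2)) * (-(1/(p*(1-p))))) p := by
    exact ((hX2.const_mul b).mul hL)
  have := h1.sub h2'
  refine this.congr_deriv ?_
  have hp : p ≠ 0 := h0.ne'
  have hq : (1:ℝ) - p ≠ 0 := by linarith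
  rw [A4, X]
  field_simp
  ring

lemma hasDerivAt_V : HasDerivAt V (X p * U p / (2 * (p * (1 - p)))) p := by
  have hX := hasDerivAt_X h0 h2
  have hL := hasDerivAt_L h0 h2
  have hX2 : HasDerivAt (fun x => 1 - b * X x ^ 2) (4 * b * X p) p := by
    have := ((hX.pow 2).const_mul b).const_sub 1
    refine this.congr_deriv ?_
    simp
    ring
  have h1 : HasDerivAt (fun x => (1 - b * X x ^ 2) * L x / 2)
      (((4 * b * X p) * L p + (1 - b * X p ^ 2) * (-(1/(p*(1-p))))) / 2) p :=
    (hX2.mul hL).div_const 2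
  have := hX.sub h1
  refine this.congr_deriv ?_
  have hp : p ≠ 0 := h0.ne'
  have hq : (1:ℝ) - p ≠ 0 := by linarith
  rw [U, X, b]
  field_simp
  ring

lemma hasDerivAt_Psi : HasDerivAt Psi (V p / (X p * (p * (1 - p)) * L p)) p := by
  have hX := hasDerivAt_X h0 h2
  have hL := hasDerivAt_L h0 h2
  have hQ := hasDerivAt_Q h0 h2
  have hXp := Xpos h0 h2
  have hLp := Lpos h0 h2
  have hQp := Qpos h0 h2
  have h1 : HasDerivAt (fun x => Real.log (2 * X x)) ((2 * (-2)) / (2 * X p)) p :=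
    (hX.const_mul 2).log (by positivity)
  have h2' : HasDerivAt (fun x => Real.log (L x)) ((-(1/(p*(1-p)))) / L p) p :=
    hL.log hLp.ne'
  have h3 : HasDerivAt (fun x => (1 - c) * Real.log (Q x))
      ((1 - c) * ((4 - 8 * p) / Q p)) p := (hQ.log hQp.ne').const_mul _
  have := (h1.sub h2').sub h3
  refine this.congr_deriv ?_
  have hp : p ≠ 0 := h0.ne'
  have hq : (1:ℝ) - p ≠ 0 := by linarith
  have hLne : L p ≠ 0 := hLp.ne'
  have hXne : (1:ℝ) - 2 * p ≠ 0 := by rw [X] at hXp; linarith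
  simp only [V, Q, X, b]
  field_simp
  ring

lemma hasDerivAt_F : HasDerivAt F (2 * X p * Q p ^ (c - 1) - L p) p := by
  have hQ := hasDerivAt_Q h0 h2
  have hQp := Qpos h0 h2
  have h1 : HasDerivAt (fun x => Real.log 2 * Q x ^ c)
      (Real.log 2 * ((4 - 8 * p) * c * Q p ^ (c - 1))) p :=
    (hQ.rpow_const (Or.inl hQp.ne')).const_mul _
  have h2' : HasDerivAt Real.binEntropy (Real.log (1 - p) - Real.log p) p :=
    Real.hasDerivAt_binEntropy h0.ne' (by linarith)
  have := h1.sub h2'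
  refine this.congr_deriv ?_
  have hc := log2c
  rw [L, X]
  linear_combination (4 - 8*p) * (Q p ^ (c-1)) * hc
end deriv

lemma c_pos : 0 < c := by have := c_gt; linarith

section cont

lemma contAt_L {p : ℝ} (h0 : 0 < p) (h1 : p < 1) : ContinuousAt L p := by
  have c1 : ContinuousAt (fun x : ℝ => Real.log (1 - x)) p :=
    (Real.continuousAt_log (by linarith : (1:ℝ) - p ≠ 0)).comp
      (continuousAt_const.sub continuousAt_id)
  exact c1.sub (Real.continuousAt_log h0.ne')

lemma contAt_X {p : ℝ} : ContinuousAt X p := by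
  exact continuousAt_const.sub (continuousAt_id.const_mul 2)

lemma contAt_A4 {p : ℝ} (h0 : 0 < p) (h1 : p < 1) : ContinuousAt A4 p :=
  contAt_X.mul (contAt_L h0 h1)

lemma contAt_U {p : ℝ} (h0 : 0 < p) (h1 : p < 1) : ContinuousAt U p :=
  (continuousAt_const.mul contAt_X).sub
    ((continuousAt_const.mul (continuousAt_const.sub (contAt_X.pow 2))).mul (contAt_L h0 h1))

lemma contAt_V {p : ℝ} (h0 : 0 < p) (h1 : p < 1) : ContinuousAt V p :=
  contAt_X.sub (((continuousAt_const.sub (continuousAt_const.mul (contAt_X.pow 2))).mul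
    (contAt_L h0 h1)).div_const 2)

lemma contAt_Psi {p : ℝ} (h0 : 0 < p) (h2 : p < 1/2) : ContinuousAt Psi p := by
  have hX := Xpos h0 h2
  have hL := Lpos h0 h2
  have hQ := Qpos h0 h2
  have c1 : ContinuousAt (fun x : ℝ => Real.log (2 * X x)) p :=
    (Real.continuousAt_log (by positivity)).comp (continuousAt_const.mul contAt_X)
  have c2 : ContinuousAt (fun x : ℝ => Real.log (L x)) p :=
    (Real.continuousAt_log hL.ne').comp (contAt_L h0 (by linarith))
  have c3 : ContinuousAt (fun x : ℝ => Real.log (Q x)) p :=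
    (Real.continuousAt_log hQ.ne').comp
      ((continuousAt_const.mul continuousAt_id).mul (continuousAt_const.sub continuousAt_id))
  exact (c1.sub c2).sub (continuousAt_const.mul c3)

lemma contAt_F {p : ℝ} : ContinuousAt F p := by
  have c1 : ContinuousAt (fun x : ℝ => Q x ^ c) p := by
    apply ContinuousAt.comp (g := fun y : ℝ => y ^ c)
    · exact Real.continuousAt_rpow_const (Q p) c (Or.inr c_pos.le)
    · exact (continuousAt_const.mul continuousAt_id).mul (continuousAt_const.sub continuousAt_id)
  exact (continuousAt_const.mul c1).sub Real.binEntropy_continuous.continuousAt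

end cont

noncomputable def K4 : ℝ := (6 * b - 2) / (4 * b)

lemma K4_bounds : 1/4 < K4 ∧ K4 < 1/2 := by
  have hb1 := b_gt; have hb2 := b_lt
  constructor
  · rw [K4, lt_div_iff₀ (by linarith)]; nlinarith
  · rw [K4, div_lt_iff₀ (by linarith)]; nlinarith

lemma log3_gt_one : (1:ℝ) < Real.log 3 := by
  rw [Real.lt_log_iff_exp_lt (by norm_num : (0:ℝ) < 3)]
  have := Real.exp_one_lt_d9
  linarith

lemma A4_quarter : A4 (1/4) = Real.log 3 / 2 := by
  rw [A4, X, L]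
  rw [show (1:ℝ) - 1/4 = 3/4 by norm_num]
  rw [show Real.log (3/4) = Real.log 3 - Real.log 4 from Real.log_div (by norm_num) (by norm_num)]
  rw [show (1:ℝ)/4 = 4⁻¹ by norm_num, Real.log_inv]
  ring

lemma A4_twofifth : A4 (2/5) = Real.log (3/2) / 5 := by
  rw [A4, X, L]
  rw [show (1:ℝ) - 2/5 = 3/5 by norm_num]
  rw [show Real.log (3/5) = Real.log 3 - Real.log 5 from Real.log_div (by norm_num) (by norm_num)]
  rw [show Real.log (2/5) = Real.log 2 - Real.log 5 from Real.log_div (by norm_num) (by norm_num)]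
  rw [show Real.log (3/2) = Real.log 3 - Real.log 2 from Real.log_div (by norm_num) (by norm_num)]
  ring

lemma A4_anti : StrictAntiOn A4 (Ioc 0 (1/2)) := by
  apply strictAntiOn_of_deriv_neg (convex_Ioc _ _)
  · intro x hx
    exact (contAt_A4 hx.1 (by linarith [hx.2])).continuousWithinAt
  · intro x hx
    rw [interior_Ioc] at hx
    rw [(hasDerivAt_A4 hx.1 hx.2).deriv]
    exact A4_deriv_neg hx.1 hx.2

lemma exists_p3 : ∃ p3 ∈ Ioo (1/4 : ℝ) (2/5), A4 p3 = K4 := by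
  have hcont : ContinuousOn A4 (Icc (1/4 : ℝ) (2/5)) := by
    intro x hx
    exact (contAt_A4 (by linarith [hx.1]) (by linarith [hx.2])).continuousWithinAt
  have hK := K4_bounds
  have h1 : A4 (2/5) < K4 := by
    rw [A4_twofifth]
    have hl : Real.log (3/2) ≤ Real.log 2 := Real.log_le_log (by norm_num) (by norm_num)
    have := Real.log_two_lt_d9
    linarith
  have h2 : K4 < A4 (1/4) := by
    rw [A4_quarter]
    have := log3_gt_one
    linarith
  have := intermediate_value_Ioo' (by norm_num : (1/4 : ℝ) ≤ 2/5) hcont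
    (show K4 ∈ Ioo (A4 (2/5)) (A4 (1/4)) from ⟨h1, h2⟩)
  obtain ⟨p3, hp3, hval⟩ := this
  exact ⟨p3, hp3, hval⟩

lemma U_half : U (1/2) = 0 := by
  have : L (1/2) = 0 := by rw [L]; norm_num
  rw [U, this, X]; ring

lemma L_hundredth : L (1/100) = Real.log 99 := by
  rw [L]
  rw [show (1:ℝ) - 1/100 = 99/100 by norm_num]
  rw [show Real.log (99/100) = Real.log 99 - Real.log 100 from
    Real.log_div (by norm_num) (by norm_num)]
  rw [show Real.log (1/100) = Real.log 1 - Real.log 100 from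
    Real.log_div (by norm_num) (by norm_num)]
  simp

lemma log99_lt : Real.log 99 < 4.8521 := by
  have h1 : Real.log 99 ≤ Real.log 128 := Real.log_le_log (by norm_num) (by norm_num)
  have h2 : Real.log 128 = 7 * Real.log 2 := by
    rw [show (128:ℝ) = 2^7 by norm_num, Real.log_pow]; norm_num
  have := Real.log_two_lt_d9
  nlinarith

lemma log99_gt : 4.158 < Real.log 99 := by
  have h1 : Real.log 64 ≤ Real.log 99 := Real.log_le_log (by norm_num) (by norm_num)
  have h2 : Real.log 64 = 6 * Real.log 2 := by
    rw [show (64:ℝ) = 2^6 by norm_num, Real.log_pow]; norm_num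
  have := Real.log_two_gt_d9
  nlinarith

lemma U_hundredth_pos : 0 < U (1/100) := by
  rw [U, X, L_hundredth]
  have h1 := log99_lt
  have hb1 := b_gt; have hb2 := b_lt
  have hl0 : 0 < Real.log 99 := by nlinarith [log99_gt]
  nlinarith

lemma U_shape : ∃ pu ∈ Ioo (1/100 : ℝ) (2/5),
    (∀ p ∈ Ioo (0:ℝ) pu, 0 < U p) ∧ (∀ p ∈ Ioo pu (1/2 : ℝ), U p < 0) := by
  obtain ⟨p3, hp3mem, hp3val⟩ := exists_p3
  have hp30 : 0 < p3 := by linarith [hp3mem.1]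
  have hp32 : p3 < 1/2 := by linarith [hp3mem.2]
  have hb1 := b_gt
  -- U is strictly decreasing on (0, p3]
  have hanti : StrictAntiOn U (Ioc 0 p3) := by
    apply strictAntiOn_of_deriv_neg (convex_Ioc _ _)
    · intro x hx
      exact (contAt_U hx.1 (by linarith [hx.2])).continuousWithinAt
    · intro x hx
      rw [interior_Ioc] at hx
      have hx2 : x < 1/2 := lt_trans hx.2 hp32
      rw [(hasDerivAt_U hx.1 hx2).deriv]
      have hA : A4 p3 < A4 x := A4_anti ⟨hx.1, by linarith⟩ ⟨hp30, by linarith⟩ hx.2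
      rw [hp3val] at hA
      rw [K4] at hA
      have h4b : (0:ℝ) < 4 * b := by linarith
      rw [div_lt_iff₀ h4b] at hA
      nlinarith
  -- U is strictly increasing on [p3, 1/2]
  have hmono : StrictMonoOn U (Icc p3 (1/2)) := by
    apply strictMonoOn_of_deriv_pos (convex_Icc _ _)
    · intro x hx
      exact (contAt_U (by linarith [hx.1]) (by linarith [hx.2])).continuousWithinAt
    · intro x hx
      rw [interior_Icc] at hx
      rw [(hasDerivAt_U (by linarith [hx.1]) hx.2).deriv]
      have hA : A4 x < A4 p3 := A4_anti ⟨hp30, by linarith⟩ ⟨by linarith [hx.1], by linarith [hx.2]⟩ hx.1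
      rw [hp3val, K4] at hA
      have h4b : (0:ℝ) < 4 * b := by linarith
      rw [lt_div_iff₀ h4b] at hA
      nlinarith
  have hUlate : ∀ p ∈ Ico p3 (1/2 : ℝ), U p < 0 := by
    intro p hp
    have := hmono ⟨hp.1, le_of_lt hp.2⟩ ⟨le_of_lt hp32, le_refl _⟩ hp.2
    rw [U_half] at this
    exact this
  have hUp3 : U p3 < 0 := hUlate p3 ⟨le_refl _, hp32⟩
  -- IVT on [1/100, p3]
  have hcont : ContinuousOn U (Icc (1/100 : ℝ) p3) := by
    intro x hx
    exact (contAt_U (by linarith [hx.1]) (by linarith [hx.2])).continuousWithinAt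
  have h14 : (1/100 : ℝ) ≤ p3 := by linarith [hp3mem.1]
  have := intermediate_value_Ioo' h14 hcont
    (show (0:ℝ) ∈ Ioo (U p3) (U (1/100)) from ⟨hUp3, U_hundredth_pos⟩)
  obtain ⟨pu, hpu, hpuval⟩ := this
  refine ⟨pu, ⟨hpu.1, by linarith [hpu.2, hp3mem.2]⟩, ?_, ?_⟩
  · intro p hp
    have := hanti ⟨hp.1, by linarith [hp.2, hpu.2]⟩ ⟨by linarith [hpu.1], le_of_lt hpu.2⟩ hp.2
    rw [hpuval] at this
    exact this
  · intro p hp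
    rcases le_or_gt p p3 with h | h
    · have := hanti ⟨by linarith [hpu.1], le_of_lt hpu.2⟩ ⟨by linarith [hpu.1, hp.1], h⟩ hp.1
      rw [hpuval] at this
      exact this
    · exact hUlate p ⟨le_of_lt h, hp.2⟩

lemma hasDerivAt_L1 {p : ℝ} (h0 : 0 < p) (h1 : p < 1) : HasDerivAt L (-(1/(p*(1-p)))) p := by
  have ha : HasDerivAt (fun x : ℝ => 1 - x) (-1) p := (hasDerivAt_id p).const_sub 1
  have h2' : HasDerivAt (fun x : ℝ => Real.log (1 - x)) ((-1)/(1-p)) p :=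
    ha.log (by linarith)
  have h3 : HasDerivAt (fun x : ℝ => Real.log x) (1/p) p := by
    simpa using (hasDerivAt_id p).log h0.ne'
  have hq : (1:ℝ) - p ≠ 0 := by linarith
  have heq : (-(1/(p*(1-p)))) = (-1)/(1-p) - 1/p := by
    field_simp
    ring
  exact heq ▸ h2'.sub h3

lemma V_half : V (1/2) = 0 := by
  have : L (1/2) = 0 := by rw [L]; norm_num
  rw [V, this, X]; ring

lemma V_hundredth_neg : V (1/100) < 0 := by
  rw [V, X, L_hundredth]
  have h1 := log99_gt
  have hb1 := b_gt; have hb2 := b_lt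
  nlinarith

lemma V_shape : ∃ pv ∈ Ioo (1/100 : ℝ) (2/5),
    (∀ p ∈ Ioo (0:ℝ) pv, V p < 0) ∧ (∀ p ∈ Ioo pv (1/2 : ℝ), 0 < V p) := by
  obtain ⟨pu, hpumem, hUpos, hUneg⟩ := U_shape
  have hpu0 : 0 < pu := by linarith [hpumem.1]
  have hpu2 : pu < 1/2 := by linarith [hpumem.2]
  have hmono : StrictMonoOn V (Ioc 0 pu) := by
    apply strictMonoOn_of_deriv_pos (convex_Ioc _ _)
    · intro x hx
      exact (contAt_V hx.1 (by linarith [hx.2])).continuousWithinAt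
    · intro x hx
      rw [interior_Ioc] at hx
      have hx2 : x < 1/2 := lt_trans hx.2 hpu2
      rw [(hasDerivAt_V hx.1 hx2).deriv]
      have hXp := Xpos hx.1 hx2
      have hpq := pqpos hx.1 hx2
      have hU := hUpos x hx
      positivity
  have hanti : StrictAntiOn V (Icc pu (1/2)) := by
    apply strictAntiOn_of_deriv_neg (convex_Icc _ _)
    · intro x hx
      exact (contAt_V (by linarith [hx.1]) (by linarith [hx.2])).continuousWithinAt
    · intro x hx
      rw [interior_Icc] at hx
      have hx0 : 0 < x := lt_trans hpu0 hx.1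
      rw [(hasDerivAt_V hx0 hx.2).deriv]
      have hXp := Xpos hx0 hx.2
      have hpq := pqpos hx0 hx.2
      have hU := hUneg x hx
      have hnum : X x * U x < 0 := mul_neg_of_pos_of_neg hXp hU
      exact div_neg_of_neg_of_pos hnum (by linarith)
  have hVlate : ∀ p ∈ Ico pu (1/2 : ℝ), 0 < V p := by
    intro p hp
    have := hanti ⟨hp.1, le_of_lt hp.2⟩ ⟨le_of_lt hpu2, le_refl _⟩ hp.2
    rw [V_half] at this
    exact this
  have hVpu : 0 < V pu := hVlate pu ⟨le_refl _, hpu2⟩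
  have hcont : ContinuousOn V (Icc (1/100 : ℝ) pu) := by
    intro x hx
    exact (contAt_V (by linarith [hx.1]) (by linarith [hx.2, hpu2])).continuousWithinAt
  have h14 : (1/100 : ℝ) ≤ pu := by linarith [hpumem.1]
  have := intermediate_value_Ioo h14 hcont
    (show (0:ℝ) ∈ Ioo (V (1/100)) (V pu) from ⟨V_hundredth_neg, hVpu⟩)
  obtain ⟨pv, hpv, hpvval⟩ := this
  refine ⟨pv, ⟨hpv.1, by linarith [hpv.2, hpumem.2]⟩, ?_, ?_⟩
  · intro p hp
    have := hmono ⟨hp.1, by linarith [hp.2, hpv.2]⟩ ⟨by linarith [hpv.1], le_of_lt hpv.2⟩ hp.2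
    rw [hpvval] at this
    exact this
  · intro p hp
    rcases le_or_gt p pu with h | h
    · have := hmono ⟨by linarith [hpv.1], le_of_lt hpv.2⟩ ⟨by linarith [hpv.1, hp.1], h⟩ hp.1
      rw [hpvval] at this
      exact this
    · exact hVlate p ⟨le_of_lt h, hp.2⟩

lemma psi_tendsto : Tendsto Psi (𝓝[<] (1/2 : ℝ)) (𝓝 0) := by
  have hL12 : L (1/2) = 0 := by rw [L]; norm_num
  have hd : HasDerivAt L (-4) (1/2) := by
    have := hasDerivAt_L1 (by norm_num : (0:ℝ) < 1/2) (by norm_num)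
    convert this using 1
    norm_num
  have hs : Tendsto (slope L (1/2)) (𝓝[≠] (1/2)) (𝓝 (-4)) :=
    hasDerivAt_iff_tendsto_slope.mp hd
  have hs' : Tendsto (fun p => -4 * (slope L (1/2) p)⁻¹) (𝓝[≠] (1/2)) (𝓝 1) := by
    have := Tendsto.mul
      (tendsto_const_nhds : Tendsto (fun _ : ℝ => (-4:ℝ)) (𝓝[≠] (1/2:ℝ)) (𝓝 (-4)))
      (hs.inv₀ (by norm_num : (-4:ℝ) ≠ 0))
    convert this using 2
    norm_num
  have hmono_f : (𝓝[<] (1/2:ℝ)) ≤ (𝓝[≠] (1/2:ℝ)) :=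
    nhdsWithin_mono _ (fun x hx => ne_of_lt hx)
  have hmem : Ioo (0:ℝ) (1/2) ∈ (𝓝[<] (1/2:ℝ)) :=
    Ioo_mem_nhdsLT_of_mem (by norm_num : (1/2:ℝ) ∈ Ioc (0:ℝ) (1/2))
  have hratio : Tendsto (fun p => 2 * X p / L p) (𝓝[<] (1/2:ℝ)) (𝓝 1) := by
    apply Tendsto.congr' _ (hs'.mono_left hmono_f)
    filter_upwards [hmem] with p hp
    rw [slope_def_field, hL12]
    have : (L p / (p - 1/2))⁻¹ = (p - 1/2) / L p := by
      rw [inv_div]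
    rw [sub_zero, this, X]
    field_simp
    ring
  have hlog1 : Tendsto (fun p => Real.log (2 * X p / L p)) (𝓝[<] (1/2:ℝ)) (𝓝 0) := by
    have hc : ContinuousAt Real.log 1 := Real.continuousAt_log one_ne_zero
    have := hc.tendsto.comp hratio
    simpa [Function.comp_def] using this
  have hQ1 : Tendsto (fun p => Real.log (Q p)) (𝓝[<] (1/2:ℝ)) (𝓝 0) := by
    have hq : ContinuousAt (fun p : ℝ => Real.log (Q p)) (1/2) := by
      apply (Real.continuousAt_log _).comp
      · exact (continuousAt_const.mul continuousAt_id).mul (continuousAt_const.sub continuousAt_id)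
      · rw [Q]; norm_num
    have : Real.log (Q (1/2)) = 0 := by rw [Q]; norm_num
    have h2 := hq.tendsto
    rw [this] at h2
    exact h2.mono_left nhdsWithin_le_nhds
  have := hlog1.sub (tendsto_const_nhds.mul hQ1 :
    Tendsto (fun p => (1 - c) * Real.log (Q p)) (𝓝[<] (1/2:ℝ)) (𝓝 ((1-c) * 0)))
  rw [mul_zero, sub_zero] at this
  apply Tendsto.congr' _ this
  filter_upwards [hmem] with p hp
  have hXp := Xpos hp.1 hp.2
  have hLp := Lpos hp.1 hp.2
  rw [Psi]
  rw [Real.log_div (by positivity) hLp.ne']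

lemma Psi_eq {p : ℝ} (h0 : 0 < p) (h2 : p < 1/2) :
    Psi p = Real.log (2 * X p * Q p ^ (c-1)) - Real.log (L p) := by
  have hXp := Xpos h0 h2
  have hQp := Qpos h0 h2
  have hrp : 0 < Q p ^ (c-1) := Real.rpow_pos_of_pos hQp _
  rw [Psi, Real.log_mul (by positivity) hrp.ne', Real.log_rpow hQp]
  ring

noncomputable def p6 : ℝ := Real.exp (-60)

lemma p6_pos : 0 < p6 := Real.exp_pos _

lemma p6_small : p6 ≤ 1/50 := by
  have h1 : Real.exp (-60:ℝ) ≤ Real.exp (-4) := Real.exp_le_exp.mpr (by norm_num)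
  have h2 : Real.exp (-4:ℝ) = (Real.exp 4)⁻¹ := Real.exp_neg 4
  have h27 : (2.7:ℝ) < Real.exp 1 := by linarith [Real.exp_one_gt_d9]
  have h4 : Real.exp (4:ℝ) = Real.exp 1 ^ 4 := by
    rw [← Real.exp_nat_mul]; norm_num
  have h3 : (50:ℝ) ≤ Real.exp 4 := by
    have := pow_lt_pow_left₀ h27 (by norm_num : (0:ℝ) ≤ 2.7) (by norm_num : 4 ≠ 0)
    rw [h4]; nlinarith
  have : (Real.exp 4)⁻¹ ≤ 1/50 := by
    rw [inv_le_comm₀ (by positivity) (by norm_num)]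
    linarith
  rw [p6]; linarith [h2 ▸ h1]

lemma p6_lt_half : p6 < 1/2 := by linarith [p6_small]

lemma Psi_p6_pos : 0 < Psi p6 := by
  have h0 := p6_pos
  have h50 := p6_small
  have h2 := p6_lt_half
  have hLpos := Lpos h0 h2
  have hQp := Qpos h0 h2
  have hlogp : Real.log p6 = -60 := Real.log_exp _
  have hlog1mp_le : Real.log (1 - p6) ≤ 0 := Real.log_nonpos (by linarith) (by linarith)
  have hlog1mp_ge : -(Real.log 2) ≤ Real.log (1 - p6) := by
    have : Real.log (2⁻¹ : ℝ) ≤ Real.log (1 - p6) :=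
      Real.log_le_log (by norm_num) (by linarith)
    rwa [Real.log_inv] at this
  have hL : L p6 ≤ 60 := by rw [L, hlogp]; linarith
  have hlogQ : Real.log (Q p6) = Real.log 4 + Real.log p6 + Real.log (1 - p6) := by
    rw [Q, Real.log_mul (by positivity) (by linarith), Real.log_mul (by norm_num) h0.ne']
  have hlog4 : Real.log 4 = 2 * Real.log 2 := by
    rw [show (4:ℝ) = 2^2 by norm_num, Real.log_pow]; norm_num
  have hl2 := Real.log_two_lt_d9
  have hlogQub : Real.log (Q p6) ≤ -58.6 := by
    rw [hlogQ, hlog4, hlogp]; linarith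
  have hrpow : Q p6 ^ (c-1) = Real.exp (Real.log (Q p6) * (c-1)) :=
    Real.rpow_def_of_pos hQp _
  set t := Real.log (Q p6) * (c - 1) with ht_def
  have hc2 := c_lt
  have ht : 16 ≤ t := by
    have hkey : (0:ℝ) ≤ (-58.6 - Real.log (Q p6)) * (1 - c) := by
      have : (0:ℝ) ≤ 1 - c := by linarith
      have h2' : (0:ℝ) ≤ -58.6 - Real.log (Q p6) := by linarith
      positivity
    nlinarith
  have hexp : Real.exp t = Real.exp (t/2) ^ 2 := by
    rw [sq, ← Real.exp_add]; norm_num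
  have hexp_ge : 9 ≤ Real.exp (t/2) := by
    have := Real.add_one_le_exp (t/2)
    linarith
  have hQub : 81 ≤ Q p6 ^ (c-1) := by
    rw [hrpow, hexp]; nlinarith
  have hX : 24/25 ≤ X p6 := by rw [X]; linarith
  have hlt : L p6 < 2 * X p6 * Q p6 ^ (c-1) := by nlinarith
  rw [Psi_eq h0 h2]
  have := Real.log_lt_log hLpos hlt
  linarith

lemma Psi_shape : ∃ p0 ∈ Ioo (0:ℝ) (2/5),
    (∀ p ∈ Ioo (0:ℝ) p0, 0 < Psi p) ∧ (∀ p ∈ Ioo p0 (1/2 : ℝ), Psi p < 0) := by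
  obtain ⟨pv, hpvmem, hVneg, hVpos⟩ := V_shape
  have hpv0 : 0 < pv := by linarith [hpvmem.1]
  have hpv2 : pv < 1/2 := by linarith [hpvmem.2]
  have hanti : StrictAntiOn Psi (Ioc 0 pv) := by
    apply strictAntiOn_of_deriv_neg (convex_Ioc _ _)
    · intro x hx
      exact (contAt_Psi hx.1 (by linarith [hx.2])).continuousWithinAt
    · intro x hx
      rw [interior_Ioc] at hx
      have hx2 : x < 1/2 := lt_trans hx.2 hpv2
      rw [(hasDerivAt_Psi hx.1 hx2).deriv]
      have hXp := Xpos hx.1 hx2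
      have hpq := pqpos hx.1 hx2
      have hLp := Lpos hx.1 hx2
      have hV := hVneg x hx
      exact div_neg_of_neg_of_pos hV (by positivity)
  have hmono : StrictMonoOn Psi (Ico pv (1/2)) := by
    apply strictMonoOn_of_deriv_pos (convex_Ico _ _)
    · intro x hx
      exact (contAt_Psi (by linarith [hx.1]) hx.2).continuousWithinAt
    · intro x hx
      rw [interior_Ico] at hx
      have hx0 : 0 < x := lt_trans hpv0 hx.1
      rw [(hasDerivAt_Psi hx0 hx.2).deriv]
      have hXp := Xpos hx0 hx.2
      have hpq := pqpos hx0 hx.2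
      have hLp := Lpos hx0 hx.2
      have hV := hVpos x hx
      positivity
  have hPsilate : ∀ p ∈ Ico pv (1/2 : ℝ), Psi p < 0 := by
    intro p hp
    set m := (p + 1/2) / 2 with hm
    have hm1 : p < m := by rw [hm]; linarith [hp.2]
    have hm2 : m < 1/2 := by rw [hm]; linarith [hp.2]
    have hmmem : m ∈ Ico pv (1/2 : ℝ) := ⟨by linarith [hp.1], hm2⟩
    have hstep : Psi p < Psi m := hmono hp hmmem hm1
    have hle : Psi m ≤ 0 := by
      apply ge_of_tendsto psi_tendsto
      filter_upwards [Ioo_mem_nhdsLT_of_mem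
        (show (1/2:ℝ) ∈ Ioc m (1/2) from ⟨hm2, le_refl _⟩)] with q hq
      exact le_of_lt (hmono hmmem ⟨by linarith [hq.1, hp.1], hq.2⟩ hq.1)
    linarith
  have hPsipv : Psi pv < 0 := hPsilate pv ⟨le_refl _, hpv2⟩
  have hp6v : p6 < pv := by
    by_contra h
    push_neg at h
    have := hPsilate p6 ⟨h, p6_lt_half⟩
    linarith [Psi_p6_pos]
  have hcont : ContinuousOn Psi (Icc p6 pv) := by
    intro x hx
    exact (contAt_Psi (lt_of_lt_of_le p6_pos hx.1)
      (by linarith [hx.2])).continuousWithinAt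
  have := intermediate_value_Ioo' (le_of_lt hp6v) hcont
    (show (0:ℝ) ∈ Ioo (Psi pv) (Psi p6) from ⟨hPsipv, Psi_p6_pos⟩)
  obtain ⟨p0, hp0, hp0val⟩ := this
  have hp00 : 0 < p0 := lt_of_lt_of_le p6_pos (le_of_lt hp0.1)
  refine ⟨p0, ⟨hp00, by linarith [hp0.2, hpvmem.2]⟩, ?_, ?_⟩
  · intro p hp
    have := hanti ⟨hp.1, by linarith [hp.2, hp0.2]⟩ ⟨hp00, le_of_lt hp0.2⟩ hp.2
    rw [hp0val] at this
    exact this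
  · intro p hp
    rcases le_or_gt p pv with h | h
    · have := hanti ⟨hp00, le_of_lt hp0.2⟩ ⟨by linarith [hp.1], h⟩ hp.1
      rw [hp0val] at this
      linarith
    · exact hPsilate p ⟨le_of_lt h, hp.2⟩

lemma F_zero : F 0 = 0 := by
  rw [F, Q]
  norm_num [Real.zero_rpow c_pos.ne']

lemma F_half : F (1/2) = 0 := by
  rw [F]
  have hq : Q (1/2) = 1 := by rw [Q]; norm_num
  rw [hq, Real.one_rpow]
  have : Real.binEntropy (1/2 : ℝ) = Real.log 2 := by
    rw [show (1/2:ℝ) = 2⁻¹ by norm_num]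
    exact Real.binEntropy_two_inv
  rw [this]; ring

lemma F_nonneg : ∀ p ∈ Icc (0:ℝ) (1/2), 0 ≤ F p := by
  obtain ⟨p0, hp0mem, hPsipos, hPsineg⟩ := Psi_shape
  have hp00 : 0 < p0 := hp0mem.1
  have hp02 : p0 < 1/2 := by linarith [hp0mem.2]
  have hFpos_iff : ∀ q ∈ Ioo (0:ℝ) (1/2), 0 < Psi q → 0 < 2 * X q * Q q ^ (c-1) - L q := by
    intro q hq hps
    rw [Psi_eq hq.1 hq.2] at hps
    have hLp := Lpos hq.1 hq.2
    have : Real.log (L q) < Real.log (2 * X q * Q q ^ (c-1)) := by linarith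
    have hXp := Xpos hq.1 hq.2
    have hQp := Qpos hq.1 hq.2
    have hrp : (0:ℝ) < Q q ^ (c-1) := Real.rpow_pos_of_pos hQp _
    have := (Real.log_lt_log_iff hLp (by positivity)).mp this
    linarith
  have hFneg_iff : ∀ q ∈ Ioo (0:ℝ) (1/2), Psi q < 0 → 2 * X q * Q q ^ (c-1) - L q < 0 := by
    intro q hq hps
    rw [Psi_eq hq.1 hq.2] at hps
    have hLp := Lpos hq.1 hq.2
    have hXp := Xpos hq.1 hq.2
    have hQp := Qpos hq.1 hq.2
    have hrp : (0:ℝ) < Q q ^ (c-1) := Real.rpow_pos_of_pos hQp _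
    have : Real.log (2 * X q * Q q ^ (c-1)) < Real.log (L q) := by linarith
    have := (Real.log_lt_log_iff (by positivity) hLp).mp this
    linarith
  have hmono : StrictMonoOn F (Icc 0 p0) := by
    apply strictMonoOn_of_deriv_pos (convex_Icc _ _)
    · exact fun x _ => contAt_F.continuousWithinAt
    · intro x hx
      rw [interior_Icc] at hx
      have hx2 : x < 1/2 := lt_trans hx.2 hp02
      rw [(hasDerivAt_F hx.1 hx2).deriv]
      exact hFpos_iff x ⟨hx.1, hx2⟩ (hPsipos x hx)
  have hanti : StrictAntiOn F (Icc p0 (1/2)) := by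
    apply strictAntiOn_of_deriv_neg (convex_Icc _ _)
    · exact fun x _ => contAt_F.continuousWithinAt
    · intro x hx
      rw [interior_Icc] at hx
      have hx0 : 0 < x := lt_trans hp00 hx.1
      rw [(hasDerivAt_F hx0 hx.2).deriv]
      exact hFneg_iff x ⟨hx0, hx.2⟩ (hPsineg x hx)
  intro p hp
  rcases le_or_gt p p0 with h | h
  · rcases eq_or_lt_of_le hp.1 with h0 | h0
    · rw [← h0, F_zero]
    · have := hmono ⟨le_refl _, le_of_lt hp00⟩ ⟨hp.1, h⟩ h0
      rw [F_zero] at this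
      linarith
  · rcases eq_or_lt_of_le hp.2 with h2 | h2
    · rw [h2, F_half]
    · have := hanti ⟨le_of_lt h, hp.2⟩ ⟨le_of_lt hp02, le_refl _⟩ h2
      rw [F_half] at this
      linarith

lemma main_ineq : ∀ p : ℝ, 0 ≤ p → p ≤ 1 →
    Real.binEntropy p ≤ Real.log 2 * (4 * p * (1 - p)) ^ c := by
  have half : ∀ p : ℝ, 0 ≤ p → p ≤ 1/2 →
      Real.binEntropy p ≤ Real.log 2 * (4 * p * (1 - p)) ^ c := by
    intro p h0 h2
    have := F_nonneg p ⟨h0, h2⟩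
    rw [F, Q] at this
    linarith
  intro p h0 h1
  rcases le_or_gt p (1/2) with h | h
  · exact half p h0 h
  · have := half (1 - p) (by linarith) (by linarith)
    rw [Real.binEntropy_one_sub] at this
    calc Real.binEntropy p ≤ Real.log 2 * (4 * (1-p) * (1 - (1-p))) ^ c := this
      _ = Real.log 2 * (4 * p * (1 - p)) ^ c := by
          congr 2
          ring

end BEaux

theorem binary_entropy_le_rpow (p : ℝ) (hp0 : 0 ≤ p) (hp1 : p ≤ 1) :
    p * Real.logb 2 p⁻¹ + (1 - p) * Real.logb 2 (1 - p)⁻¹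
      ≤ (4 * p * (1 - p)) ^ (1 / Real.log 4) := by
  have hlog2 := BEaux.log2_pos
  have hc : 1 / Real.log 4 = BEaux.c := by
    rw [show (4:ℝ) = 2^2 by norm_num, Real.log_pow, BEaux.c]
    norm_num
  rw [hc]
  have hmain := BEaux.main_ineq p hp0 hp1
  have hLHS : p * Real.logb 2 p⁻¹ + (1 - p) * Real.logb 2 (1 - p)⁻¹
      = Real.binEntropy p / Real.log 2 := by
    rw [Real.logb, Real.logb, Real.binEntropy]
    field_simp
  rw [hLHS, div_le_iff₀ hlog2]
  linarith
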